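/- Let (a_n)_{n≥0} be a sequence in a metric space (X, W) and let h > 0, E_0 ≥ 0, and suppose that for every n ≥ 1, (1/(2h)) W(a_n, a_{n-1})^2 + e_n ≤ e_{n-1}, where (e_n)_{n≥0} is a sequence of nonnegative reals with e_0 = E_0. Then for all integers n_1 > n_0 ≥ 0, W(a_{n_0}, a_{n_1}) ≤ √2 · E_0^{1/2} · ((n_1 - n_0) h)^{1/2}. -/

import Mathlib

open Real

/-- Abstract Hölder-1/2-in-time estimate for minimizing movements: if
`(1/(2h)) W(a_n, a_{n-1})² + e_n ≤ e_{n-1}` with `0 ≤ e_n` and `e_0 = E0`, then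
`W(a_{n₀}, a_{n₁}) ≤ √2 · E0^{1/2} · ((n₁ - n₀) h)^{1/2}`. -/
theorem minimizing_movements_holder_half
    {X : Type*} [PseudoMetricSpace X]
    (a : ℕ → X) (e : ℕ → ℝ) (h E0 : ℝ)
    (hh : 0 < h) (hE0 : 0 ≤ E0)
    (he0 : e 0 = E0) (henn : ∀ n, 0 ≤ e n)
    (hdiss : ∀ n : ℕ, 1 ≤ n → (1 / (2 * h)) * dist (a n) (a (n - 1)) ^ 2 + e n ≤ e (n - 1)) :
    ∀ n₀ n₁ : ℕ, n₀ < n₁ →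
      dist (a n₀) (a n₁) ≤ Real.sqrt 2 * E0 ^ ((1 : ℝ) / 2) * (((n₁ : ℝ) - n₀) * h) ^ ((1 : ℝ) / 2) := by
  intro n₀ n₁ hlt
  set N := n₁ - n₀ with hN
  have hn₁ : n₀ + N = n₁ := Nat.add_sub_cancel' hlt.le
  -- single step estimate
  have step : ∀ k : ℕ, dist (a k) (a (k + 1)) ^ 2 ≤ 2 * h * (e k - e (k + 1)) := by
    intro k
    have := hdiss (k + 1) (Nat.le_add_left 1 k)
    simp only [Nat.add_sub_cancel] at this
    rw [dist_comm]
    have h2h : (0:ℝ) < 2 * h := by linarith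
    have := mul_le_mul_of_nonneg_left this h2h.le
    rw [mul_add, ← mul_assoc, mul_one_div_cancel h2h.ne', one_mul] at this
    linarith
  -- antitone
  have emono : ∀ k : ℕ, e k ≤ E0 := by
    intro k
    induction k with
    | zero => simp [he0]
    | succ n ih =>
      have := hdiss (n + 1) (Nat.le_add_left 1 n)
      simp only [Nat.add_sub_cancel] at this
      nlinarith [sq_nonneg (dist (a (n+1)) (a n)), hh, mul_pos (by norm_num : (0:ℝ) < 2) hh,
        div_nonneg (by norm_num : (0:ℝ) ≤ 1) (by linarith : (0:ℝ) ≤ 2 * h),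
        mul_nonneg (div_nonneg (by norm_num : (0:ℝ) ≤ 1) (by linarith : (0:ℝ) ≤ 2 * h))
          (sq_nonneg (dist (a (n+1)) (a n)))]
  -- sum of squares bound
  have sumsq : ∑ k ∈ Finset.range N, dist (a (n₀ + k)) (a (n₀ + k + 1)) ^ 2 ≤ 2 * h * E0 := by
    calc ∑ k ∈ Finset.range N, dist (a (n₀ + k)) (a (n₀ + k + 1)) ^ 2
        ≤ ∑ k ∈ Finset.range N, (2 * h * (e (n₀ + k) - e (n₀ + k + 1))) :=
          Finset.sum_le_sum fun k _ => step (n₀ + k)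
      _ = 2 * h * (e n₀ - e (n₀ + N)) := by
          rw [← Finset.mul_sum]
          congr 1
          have := Finset.sum_range_sub' (fun k => e (n₀ + k)) N
          simpa [add_assoc] using this
      _ ≤ 2 * h * E0 := by
          have h1 := emono n₀
          have h2 := henn (n₀ + N)
          nlinarith
  -- triangle inequality
  have tri : dist (a n₀) (a n₁) ≤ ∑ k ∈ Finset.range N, dist (a (n₀ + k)) (a (n₀ + k + 1)) := by
    have := dist_le_range_sum_dist (fun k => a (n₀ + k)) N
    simpa [hn₁, add_assoc] using this
  -- Cauchy-Schwarz
  have cs := sq_sum_le_card_mul_sum_sq (s := Finset.range N)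
    (f := fun k => dist (a (n₀ + k)) (a (n₀ + k + 1)))
  rw [Finset.card_range] at cs
  have hsum_nonneg : (0:ℝ) ≤ ∑ k ∈ Finset.range N, dist (a (n₀ + k)) (a (n₀ + k + 1)) :=
    Finset.sum_nonneg fun k _ => dist_nonneg
  have key : dist (a n₀) (a n₁) ^ 2 ≤ 2 * E0 * ((N : ℝ) * h) := by
    calc dist (a n₀) (a n₁) ^ 2
        ≤ (∑ k ∈ Finset.range N, dist (a (n₀ + k)) (a (n₀ + k + 1))) ^ 2 :=
          pow_le_pow_left₀ dist_nonneg tri 2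
      _ ≤ (N : ℝ) * ∑ k ∈ Finset.range N, dist (a (n₀ + k)) (a (n₀ + k + 1)) ^ 2 := cs
      _ ≤ (N : ℝ) * (2 * h * E0) := by
          apply mul_le_mul_of_nonneg_left sumsq (Nat.cast_nonneg N)
      _ = 2 * E0 * ((N : ℝ) * h) := by ring
  -- convert to sqrt form
  have hNcast : ((n₁ : ℝ) - n₀) = (N : ℝ) := by
    rw [hN, Nat.cast_sub hlt.le]
  rw [hNcast]
  have hNh : (0:ℝ) ≤ (N : ℝ) * h := mul_nonneg (Nat.cast_nonneg N) hh.le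
  rw [← Real.sqrt_eq_rpow, ← Real.sqrt_eq_rpow,
    ← Real.sqrt_mul (by norm_num : (0:ℝ) ≤ 2), ← Real.sqrt_mul (by positivity)]
  have := Real.sqrt_le_sqrt key
  rwa [Real.sqrt_sq dist_nonneg] at this
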